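/- Define f : ℝ → ℝ by f(x) := min{0, h(x)} − g(x) + |x|, where g(x) := ∫₀ˣ 2u·sin(1/u) du (integrand understood as 0 at u = 0) and h(x) := x²·sin(1/x) for x ≠ 0, h(0) := 0. Then f′₊(0) = 1 and f′₋(0) = −1; in particular x* = 0 is a stationary point of f, and 0 is an isolated local minimum point of f: f(0) < f(x) for every x ∈ (−1/π, 1/π) with x ≠ 0. -/

import Mathlib

open Filter Metric Set Real

noncomputable section

/-- Left derivative `f′₋(x) = d`: `(f y - f x)/(y - x) → d` as `y ↑ x`. -/
def HasLeftDeriv (f : ℝ → ℝ) (x d : ℝ) : Prop :=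
  Filter.Tendsto (fun y : ℝ => (f y - f x) / (y - x)) (nhdsWithin x (Set.Iio x)) (nhds d)

/-- Right derivative `f′₊(x) = d`: `(f y - f x)/(y - x) → d` as `y ↓ x`. -/
def HasRightDeriv (f : ℝ → ℝ) (x d : ℝ) : Prop :=
  Filter.Tendsto (fun y : ℝ => (f y - f x) / (y - x)) (nhdsWithin x (Set.Ioi x)) (nhds d)

/-- `x` is a `δ`-stationary point of `f : ℝ → ℝ`: `f′₋(x) ≤ δ` and `f′₊(x) ≥ -δ`. -/
def IsDeltaStationaryPt1 (f : ℝ → ℝ) (δ x : ℝ) : Prop :=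
  ∃ dm dp : ℝ, HasLeftDeriv f x dm ∧ HasRightDeriv f x dp ∧ dm ≤ δ ∧ -δ ≤ dp

/-- `x` is a stationary point of `f : ℝ → ℝ`: `f′₋(x) ≤ 0` and `f′₊(x) ≥ 0`. -/
def IsStationaryPt1 (f : ℝ → ℝ) (x : ℝ) : Prop :=
  IsDeltaStationaryPt1 f 0 x

/-- `g(x) = ∫₀ˣ 2u sin(1/u) du`, with the integrand extended by `0` at `u = 0`. -/
def gEx (x : ℝ) : ℝ := ∫ u in (0 : ℝ)..x, if u = 0 then 0 else 2 * u * Real.sin (1 / u)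

/-- `h(x) = x² sin(1/x)` for `x ≠ 0`, `h(0) = 0`. -/
def hEx (x : ℝ) : ℝ := if x = 0 then 0 else x ^ 2 * Real.sin (1 / x)

/-- `f(x) = min {0, h(x)} - g(x) + |x|`. -/
def fEx (x : ℝ) : ℝ := min 0 (hEx x) - gEx x + |x|

/-- `f′₊(0) = 1` and `f′₋(0) = -1`; in particular `0` is a stationary point of `f`,
and `0` is an isolated local minimum point: `f 0 < f x` for every
`x ∈ (-1/π, 1/π)` with `x ≠ 0`. -/

lemma gEx_abs_le (x : ℝ) : |gEx x| ≤ 2 * x ^ 2 := by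
  have h := intervalIntegral.norm_integral_le_of_norm_le_const (a := (0:ℝ)) (b := x)
    (C := 2 * |x|) (f := fun u => if u = 0 then 0 else 2 * u * Real.sin (1 / u)) ?_
  · have hx : |x - 0| = |x| := by simp
    rw [hx] at h
    calc |gEx x| ≤ 2 * |x| * |x| := h
    _ = 2 * x ^ 2 := by rw [mul_assoc, abs_mul_abs_self]; ring
  · intro u hu
    have hu' : |u| ≤ |x| := by
      rcases Set.mem_uIoc.mp hu with ⟨h1, h2⟩ | ⟨h1, h2⟩
      · rw [abs_of_pos h1, abs_of_nonneg (le_trans h1.le h2)]; exact h2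
      · rw [abs_of_nonpos h2, abs_of_nonpos (le_trans h1.le h2)]; linarith
    by_cases h0 : u = 0
    · simp [h0]
    · simp only [h0, if_false, Real.norm_eq_abs]
      calc |2 * u * Real.sin (1 / u)| = 2 * |u| * |Real.sin (1 / u)| := by
            rw [abs_mul, abs_mul]; simp
      _ ≤ 2 * |u| * 1 := by
            apply mul_le_mul_of_nonneg_left (Real.abs_sin_le_one _) (by positivity)
      _ ≤ 2 * |x| := by nlinarith

lemma min_hEx_abs_le (x : ℝ) : |min 0 (hEx x)| ≤ x ^ 2 := by
  have hh : |hEx x| ≤ x ^ 2 := by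
    by_cases h0 : x = 0
    · simp [hEx, h0]
    · simp only [hEx, h0, if_false, abs_mul]
      have hsq : |x ^ 2| = x ^ 2 := abs_of_nonneg (sq_nonneg x)
      rw [hsq]
      nlinarith [Real.abs_sin_le_one (1 / x), sq_nonneg x, abs_nonneg (Real.sin (1/x))]
  rw [abs_le] at hh ⊢
  constructor
  · exact le_min (by nlinarith [sq_nonneg x]) hh.1
  · exact le_trans (min_le_left _ _) (by positivity)

lemma gEx_zero : gEx 0 = 0 := by simp [gEx]

lemma fEx_zero : fEx 0 = 0 := by simp [fEx, hEx, gEx_zero]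

lemma fEx_sub_abs_le (x : ℝ) : abs (fEx x - |x|) ≤ 3 * x ^ 2 := by
  have h1 := min_hEx_abs_le x
  have h2 := gEx_abs_le x
  have : fEx x - |x| = min 0 (hEx x) - gEx x := by simp [fEx]
  rw [this]
  calc |min 0 (hEx x) - gEx x| ≤ |min 0 (hEx x)| + |gEx x| := abs_sub _ _
    _ ≤ 3 * x ^ 2 := by linarith

lemma aux_tendsto : Filter.Tendsto (fun y : ℝ => (fEx y - |y|) / y) (nhds 0) (nhds 0) := by
  apply squeeze_zero_norm (a := fun y : ℝ => 3 * |y|)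
  · intro y
    by_cases h0 : y = 0
    · simp [h0, fEx_zero]
    · rw [Real.norm_eq_abs, abs_div]
      rw [div_le_iff₀ (by positivity : (0:ℝ) < |y|)]
      calc abs (fEx y - |y|) ≤ 3 * y ^ 2 := fEx_sub_abs_le y
        _ = 3 * |y| * |y| := by rw [mul_assoc, abs_mul_abs_self]; ring
  · have : Filter.Tendsto (fun y : ℝ => |y|) (nhds 0) (nhds 0) := by
      simpa using continuous_abs.tendsto (0:ℝ)
    simpa using this.const_mul 3

theorem fEx_zero_isolated_local_min :
    HasRightDeriv fEx 0 1 ∧ HasLeftDeriv fEx 0 (-1) ∧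
    IsStationaryPt1 fEx 0 ∧
    (∀ x ∈ Set.Ioo (-(1 / Real.pi)) (1 / Real.pi), x ≠ 0 → fEx 0 < fEx x) := by
  have hright : HasRightDeriv fEx 0 1 := by
    unfold HasRightDeriv
    have h1 : Filter.Tendsto (fun y : ℝ => (fEx y - |y|) / y + 1) (nhdsWithin 0 (Set.Ioi 0)) (nhds 1) := by
      have := (aux_tendsto.mono_left (nhdsWithin_le_nhds :
        nhdsWithin (0:ℝ) (Set.Ioi 0) ≤ nhds 0)).add (tendsto_const_nhds (x := (1:ℝ)))
      simpa using this
    apply h1.congr'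
    filter_upwards [self_mem_nhdsWithin] with y hy
    have hy0 : y > 0 := hy
    have hyne : y ≠ 0 := ne_of_gt hy0
    rw [fEx_zero, abs_of_pos hy0, sub_zero, sub_zero]
    field_simp
    ring
  have hleft : HasLeftDeriv fEx 0 (-1) := by
    unfold HasLeftDeriv
    have h1 : Filter.Tendsto (fun y : ℝ => (fEx y - |y|) / y + (-1)) (nhdsWithin 0 (Set.Iio 0)) (nhds (-1)) := by
      have := (aux_tendsto.mono_left (nhdsWithin_le_nhds :
        nhdsWithin (0:ℝ) (Set.Iio 0) ≤ nhds 0)).add (tendsto_const_nhds (x := (-1:ℝ)))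
      simpa using this
    apply h1.congr'
    filter_upwards [self_mem_nhdsWithin] with y hy
    have hy0 : y < 0 := hy
    have hyne : y ≠ 0 := ne_of_lt hy0
    rw [fEx_zero, abs_of_neg hy0, sub_zero, sub_zero]
    field_simp
    ring
  refine ⟨hright, hleft, ⟨-1, 1, hleft, hright, by norm_num, by norm_num⟩, ?_⟩
  intro x hx hx0
  rw [fEx_zero]
  have hxlt : |x| < 1 / Real.pi := abs_lt.mpr ⟨hx.1, hx.2⟩
  have hxpos : 0 < |x| := abs_pos.mpr hx0
  have hpi : (3:ℝ) < Real.pi := by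
    have := Real.pi_gt_three
    linarith
  have hpi0 : (0:ℝ) < Real.pi := by linarith
  have h3x : 3 * |x| < 1 := by
    have h2 : 3 * (1 / Real.pi) < 1 := by
      rw [mul_one_div, div_lt_one hpi0]; linarith
    nlinarith
  have hb := fEx_sub_abs_le x
  rw [abs_le] at hb
  have hx2 : 3 * x ^ 2 = 3 * |x| * |x| := by rw [mul_assoc, abs_mul_abs_self]; ring
  nlinarith [hb.1]
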